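/- For the iterated Latin hypercube sampling sequence with k ≥ 2 coordinates, let h_1, h_2 : [0,1] → ℝ be nondecreasing functions, and for each time s ≥ 0 let F_s^{(h_1,h_2)}(u,v) = P(h_1(U_s^{(1)}) ≤ u, h_2(U_s^{(2)}) ≤ v) be the joint CDF of (h_1(U_s^{(1)}), h_2(U_s^{(2)})). Then for all integers t ≥ 0 and m ≥ 1, the Kolmogorov–Smirnov distance satisfies sup_{(u,v) ∈ ℝ²} |F_{t+m}^{(h_1,h_2)}(u,v) − F_t^{(h_1,h_2)}(u,v)| ≤ k^{−(t−1)} (k−1)^{−(t+2)}. -/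

import Mathlib

open MeasureTheory ProbabilityTheory

instance {k : ℕ} : MeasurableSpace (Equiv.Perm (Fin k)) := ⊤

/-- The iterated Latin hypercube sampling (ILHS) recursion:
`U₀` has i.i.d. Uniform(0,1) coordinates and
`U_{t+1}⁽ʲ⁾ = (σ_t(j) + U_t⁽ʲ⁾)/k`. -/
noncomputable def ilhs {Ω : Type*} {k : ℕ} (U0 : Fin k → Ω → ℝ)
    (σ : ℕ → Ω → Equiv.Perm (Fin k)) : ℕ → Fin k → Ω → ℝ
  | 0 => U0
  | t + 1 => fun j ω => (((σ t ω j : ℕ) : ℝ) + ilhs U0 σ t j ω) / k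

/-- Value types for the joint family consisting of the initial uniforms and the random
permutations. -/
def ilhsβ (k : ℕ) : Fin k ⊕ ℕ → Type
  | Sum.inl _ => ℝ
  | Sum.inr _ => Equiv.Perm (Fin k)

instance ilhsβMeasurableSpace (k : ℕ) : ∀ x, MeasurableSpace (ilhsβ k x)
  | Sum.inl _ => (inferInstance : MeasurableSpace ℝ)
  | Sum.inr _ => (inferInstance : MeasurableSpace (Equiv.Perm (Fin k)))

/-- The joint family consisting of the initial uniforms and the random permutations. -/
def ilhsFam {Ω : Type*} {k : ℕ} (U0 : Fin k → Ω → ℝ)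
    (σ : ℕ → Ω → Equiv.Perm (Fin k)) : ∀ x : Fin k ⊕ ℕ, Ω → ilhsβ k x
  | Sum.inl j => U0 j
  | Sum.inr t => σ t

/-- The defining hypotheses of the ILHS sequence: the initial coordinates are
Uniform(0,1), each `σ_t` is a uniformly distributed random permutation of
`{0, …, k−1}`, and all of these are mutually independent. -/
def IsILHS {Ω : Type*} [MeasurableSpace Ω] (μ : Measure Ω) {k : ℕ}
    (U0 : Fin k → Ω → ℝ) (σ : ℕ → Ω → Equiv.Perm (Fin k)) : Prop :=
  (∀ j, Measurable (U0 j)) ∧ (∀ t, Measurable (σ t)) ∧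
  (∀ j, μ.map (U0 j) = volume.restrict (Set.Ioo (0 : ℝ) 1)) ∧
  (∀ t (π : Equiv.Perm (Fin k)), μ {ω | σ t ω = π} = ((Nat.factorial k : ENNReal))⁻¹) ∧
  iIndepFun (m := ilhsβMeasurableSpace k) (ilhsFam U0 σ) μ


namespace ILHSP

noncomputable def cl (x : ℝ) : ℝ := max 0 (min x 1)

lemma cl_nonneg (x : ℝ) : 0 ≤ cl x := le_max_left _ _
lemma cl_le_one (x : ℝ) : cl x ≤ 1 := max_le zero_le_one (min_le_right _ _)
lemma cl_of_nonpos {x : ℝ} (h : x ≤ 0) : cl x = 0 :=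
  max_eq_left (min_le_of_left_le h)
lemma cl_of_one_le {x : ℝ} (h : 1 ≤ x) : cl x = 1 := by
  simp [cl, min_eq_right h]
lemma cl_of_mem {x : ℝ} (h0 : 0 ≤ x) (h1 : x ≤ 1) : cl x = x := by
  simp [cl, min_eq_left h1, max_eq_right h0]
lemma cl_mono : Monotone cl := fun _ _ hxy =>
  max_le_max le_rfl (min_le_min hxy le_rfl)
lemma cl_lipschitz (x y : ℝ) : |cl x - cl y| ≤ |x - y| := by
  have h1 : |max 0 (min x 1) - max 0 (min y 1)| ≤ |min x 1 - min y 1| := by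
    simpa [max_comm] using abs_max_sub_max_le_abs (min x 1) (min y 1) 0
  have h2 : |min x 1 - min y 1| ≤ |x - y| := by
    have : |max (-x) (-1) - max (-y) (-1)| ≤ |(-x) - (-y)| :=
      abs_max_sub_max_le_abs (-x) (-y) (-1)
    rw [max_neg_neg, max_neg_neg] at this
    calc |x ⊓ 1 - y ⊓ 1| = |-(x ⊓ 1) - -(y ⊓ 1)| := by rw [← abs_neg]; ring_nf
    _ ≤ |(-x) - (-y)| := this
    _ = |x - y| := by rw [← abs_neg]; ring_nf
  exact h1.trans h2

lemma cl_mem_Ioo_of_ne {x : ℝ} (h0 : cl x ≠ 0) (h1 : cl x ≠ 1) : 0 < x ∧ x < 1 := by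
  constructor
  · by_contra hx; exact h0 (cl_of_nonpos (not_lt.1 hx))
  · by_contra hx; exact h1 (cl_of_one_le (not_lt.1 hx))

/-- the LHS clamp-sum identity -/
lemma sum_cl (n : ℕ) (c : ℝ) : ∑ i : Fin n, cl (c - i) = max 0 (min c n) := by
  induction n with
  | zero => simp
  | succ n ih =>
    rw [Fin.sum_univ_castSucc]
    simp only [Fin.coe_castSucc, Fin.val_last, ih]
    push_cast
    rcases le_total c n with hc | hc
    · rw [cl_of_nonpos (by linarith)]
      rw [min_eq_left hc, min_eq_left (by linarith)]
      ring
    · have h0 : (0:ℝ) ≤ (n:ℝ) := by positivity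
      rw [min_eq_right hc, max_eq_right h0]
      unfold cl
      rw [max_eq_right (le_min (by linarith) zero_le_one),
        max_eq_right (le_min (by linarith) (by linarith)), ← min_add_add_left,
        show (n:ℝ) + (c - n) = c by ring, show (n:ℝ) + 1 = ((n:ℝ)+1) by ring]

lemma sum_cl_mul {k : ℕ} (a : ℝ) : ∑ i : Fin k, cl ((k : ℝ) * a - i) = k * cl a := by
  rw [sum_cl]
  rcases le_total a 0 with ha | ha
  · rw [cl_of_nonpos ha, max_eq_left, mul_zero]
    rcases Nat.eq_zero_or_pos k with hk | hk
    · simp [hk]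
    · have : (k : ℝ) * a ≤ 0 := mul_nonpos_of_nonneg_of_nonpos (by positivity) ha
      exact min_le_of_left_le this
  rcases le_total 1 a with ha1 | ha1
  · rw [cl_of_one_le ha1, mul_one, min_eq_right, max_eq_right (by positivity)]
    nlinarith [Nat.cast_nonneg (α := ℝ) k]
  · rw [cl_of_mem ha ha1, min_eq_left, max_eq_right (by positivity)]
    nlinarith [Nat.cast_nonneg (α := ℝ) k]


open Finset

variable {k : ℕ}

lemma exists_perm_pair {a b i j : Fin k} (hab : a ≠ b) (hij : i ≠ j) :
    ∃ τ : Equiv.Perm (Fin k), τ a = i ∧ τ b = j := by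
  classical
  refine ⟨(Equiv.swap (Equiv.swap a i b) j) * (Equiv.swap a i), ?_, ?_⟩
  · have h2 : Equiv.swap a i b ≠ i := by
      intro hc
      apply hab
      have h := congrArg (Equiv.swap a i) hc
      rw [Equiv.swap_apply_self, Equiv.swap_apply_right] at h
      exact h.symm
    simp only [Equiv.Perm.mul_apply, Equiv.swap_apply_left]
    exact Equiv.swap_apply_of_ne_of_ne (Ne.symm h2) hij
  · simp only [Equiv.Perm.mul_apply, Equiv.swap_apply_left]

private lemma mem_fiber_map {a b : Fin k} {p q : Fin k × Fin k}
    {τp τq : Equiv.Perm (Fin k)} (hτp1 : τp a = p.1) (hτp2 : τp b = p.2)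
    (hτq1 : τq a = q.1) (hτq2 : τq b = q.2)
    (π : Equiv.Perm (Fin k)) (hπ : (π a, π b) = p) :
    ((τq * τp⁻¹ * π) a, (τq * τp⁻¹ * π) b) = q := by
  have h1 : π a = p.1 := congrArg Prod.fst hπ
  have h2 : π b = p.2 := congrArg Prod.snd hπ
  have e1 : τp⁻¹ (π a) = a := by rw [h1, ← hτp1, (Equiv.Perm.inv_eq_iff_eq.mpr rfl : τp⁻¹ (τp a) = a)]
  have e2 : τp⁻¹ (π b) = b := by rw [h2, ← hτp2, (Equiv.Perm.inv_eq_iff_eq.mpr rfl : τp⁻¹ (τp b) = b)]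
  exact Prod.ext (by simp only [Equiv.Perm.mul_apply, e1, hτq1])
    (by simp only [Equiv.Perm.mul_apply, e2, hτq2])

lemma fiber_card_eq {a b : Fin k} (hab : a ≠ b) {p q : Fin k × Fin k}
    (hp : p.1 ≠ p.2) (hq : q.1 ≠ q.2) :
    (univ.filter fun π : Equiv.Perm (Fin k) => (π a, π b) = p).card
      = (univ.filter fun π : Equiv.Perm (Fin k) => (π a, π b) = q).card := by
  classical
  obtain ⟨τp, hτp1, hτp2⟩ := exists_perm_pair hab hp
  obtain ⟨τq, hτq1, hτq2⟩ := exists_perm_pair hab hq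
  refine Finset.card_bij' (fun π _ => τq * τp⁻¹ * π) (fun π _ => τp * τq⁻¹ * π) ?_ ?_ ?_ ?_
  · intro π hπ
    simp only [mem_filter, mem_univ, true_and] at hπ ⊢
    exact mem_fiber_map hτp1 hτp2 hτq1 hτq2 π hπ
  · intro π hπ
    simp only [mem_filter, mem_univ, true_and] at hπ ⊢
    exact mem_fiber_map hτq1 hτq2 hτp1 hτp2 π hπ
  · intro π _; group
  · intro π _; group

lemma image_pair_eq_offDiag {a b : Fin k} (hab : a ≠ b) :
    (univ.image fun π : Equiv.Perm (Fin k) => (π a, π b)) = (univ : Finset (Fin k)).offDiag := by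
  classical
  ext p
  simp only [mem_image, mem_univ, true_and, Finset.mem_offDiag]
  constructor
  · rintro ⟨π, rfl⟩
    exact fun hc => hab (π.injective hc)
  · intro hp
    obtain ⟨τ, h1, h2⟩ := exists_perm_pair hab hp
    exact ⟨τ, by rw [h1, h2]⟩

lemma fiber_card_val (hk : 2 ≤ k) {a b : Fin k} (hab : a ≠ b) {p : Fin k × Fin k}
    (hp : p.1 ≠ p.2) :
    (univ.filter fun π : Equiv.Perm (Fin k) => (π a, π b) = p).card = (k - 2).factorial := by
  classical
  obtain ⟨n, rfl⟩ : ∃ n, k = n + 2 := ⟨k - 2, by omega⟩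
  have hcardP : Fintype.card (Equiv.Perm (Fin (n+2))) = (n+2).factorial := by
    rw [Fintype.card_perm, Fintype.card_fin]
  have hsum : ∑ q ∈ (univ : Finset (Fin (n+2))).offDiag,
      (univ.filter fun π : Equiv.Perm (Fin (n+2)) => (π a, π b) = q).card
      = (n+2).factorial := by
    rw [← hcardP, ← Finset.card_univ]
    exact (Finset.card_eq_sum_card_fiberwise (fun π _ =>
      Finset.mem_offDiag.2 ⟨mem_univ _, mem_univ _, fun hc => hab (π.injective hc)⟩)).symm
  have hconst : ∀ q ∈ (univ : Finset (Fin (n+2))).offDiag,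
      (univ.filter fun π : Equiv.Perm (Fin (n+2)) => (π a, π b) = q).card
      = (univ.filter fun π : Equiv.Perm (Fin (n+2)) => (π a, π b) = p).card := by
    intro q hq
    exact fiber_card_eq hab (Finset.mem_offDiag.1 hq).2.2 hp
  rw [Finset.sum_congr rfl hconst, Finset.sum_const, Finset.offDiag_card, Finset.card_univ,
    Fintype.card_fin, smul_eq_mul] at hsum
  have hcard : (n+2) * (n+2) - (n+2) = (n+2) * (n+1) :=
    Nat.sub_eq_of_eq_add (by ring)
  rw [hcard] at hsum
  have hfact : (n+2).factorial = ((n+2) * (n+1)) * ((n + 2 - 2).factorial) := by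
    simp only [Nat.add_sub_cancel]
    rw [Nat.factorial_succ, show n + 1 + 1 = n + 2 by ring, Nat.factorial_succ]
    ring
  rw [hfact] at hsum
  exact Nat.eq_of_mul_eq_mul_left (by positivity) hsum

lemma sum_perm_pair (hk : 2 ≤ k) {a b : Fin k} (hab : a ≠ b) (F : Fin k → Fin k → ℝ) :
    ∑ π : Equiv.Perm (Fin k), F (π a) (π b)
      = ((k - 2).factorial : ℝ) * ∑ p ∈ (univ : Finset (Fin k)).offDiag, F p.1 p.2 := by
  classical
  have := Finset.sum_comp (s := (univ : Finset (Equiv.Perm (Fin k))))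
    (fun p : Fin k × Fin k => F p.1 p.2) (fun π => (π a, π b))
  rw [image_pair_eq_offDiag hab] at this
  rw [this, Finset.mul_sum]
  refine Finset.sum_congr rfl fun p hp => ?_
  rw [fiber_card_val hk hab (Finset.mem_offDiag.1 hp).2.2]
  simp [nsmul_eq_mul]

lemma sum_perm_single (hk : 2 ≤ k) (a : Fin k) (f : Fin k → ℝ) :
    ∑ π : Equiv.Perm (Fin k), f (π a) = ((k - 1).factorial : ℝ) * ∑ i, f i := by
  classical
  have hcard : 1 < Fintype.card (Fin k) := by simp; omega
  obtain ⟨b, hb⟩ := Fintype.exists_ne_of_one_lt_card hcard a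
  rw [sum_perm_pair hk (Ne.symm hb) (fun i _ => f i)]
  have hprod : ∑ p ∈ (univ : Finset (Fin k)) ×ˢ (univ : Finset (Fin k)), f p.1
      = (k : ℝ) * ∑ i, f i := by
    rw [Finset.sum_product]
    simp only [Finset.sum_const, Finset.card_univ, Fintype.card_fin, nsmul_eq_mul]
    rw [Finset.mul_sum]
  have hunion := Finset.sum_union (f := fun p : Fin k × Fin k => f p.1)
    (Finset.disjoint_diag_offDiag (univ : Finset (Fin k)))
  rw [Finset.diag_union_offDiag, hprod, Finset.sum_diag] at hunion
  have hsplit : ∑ p ∈ (univ : Finset (Fin k)).offDiag, f p.1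
      = ((k : ℝ) - 1) * ∑ i, f i := by
    have : (∑ i, f i) + ∑ p ∈ (univ : Finset (Fin k)).offDiag, f p.1
        = (k:ℝ) * ∑ i, f i := hunion.symm
    linarith [this]
  rw [hsplit, ← mul_assoc]
  congr 1
  have hfac : (k - 1).factorial = (k - 1) * (k - 2).factorial := by
    rw [show k - 1 = (k - 2) + 1 by omega, Nat.factorial_succ]
  rw [hfac]
  have : ((k - 1 : ℕ) : ℝ) = (k : ℝ) - 1 := by
    push_cast [Nat.cast_sub (by omega : 1 ≤ k)]; ring
  push_cast
  rw [this]
  ring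



/-! ### Analytic layer -/

section Analytic

def IsCop (H : ℝ → ℝ → ℝ) : Prop :=
  ∀ x y, 0 ≤ H x y ∧ H x y ≤ cl x ∧ H x y ≤ cl y ∧ cl x + cl y - 1 ≤ H x y

lemma IsCop.left_zero {H} (h : IsCop H) {x} (hx : x ≤ 0) (y : ℝ) : H x y = 0 :=
  le_antisymm ((h x y).2.1.trans_eq (cl_of_nonpos hx)) (h x y).1

lemma IsCop.right_zero {H} (h : IsCop H) (x : ℝ) {y} (hy : y ≤ 0) : H x y = 0 :=
  le_antisymm ((h x y).2.2.1.trans_eq (cl_of_nonpos hy)) (h x y).1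

lemma IsCop.left_one {H} (h : IsCop H) {x} (hx : 1 ≤ x) (y : ℝ) : H x y = cl y := by
  have h4 := (h x y).2.2.2
  rw [cl_of_one_le hx] at h4
  exact le_antisymm (h x y).2.2.1 (by linarith)

lemma IsCop.right_one {H} (h : IsCop H) (x : ℝ) {y} (hy : 1 ≤ y) : H x y = cl x := by
  have h4 := (h x y).2.2.2
  rw [cl_of_one_le hy] at h4
  exact le_antisymm (h x y).2.1 (by linarith)

/-- The one-step CDF operator. -/
noncomputable def stepOp (k : ℕ) (i0 i1 : Fin k) (H : ℝ → ℝ → ℝ) (a b : ℝ) : ℝ :=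
  ((k.factorial : ℝ))⁻¹ *
    ∑ π : Equiv.Perm (Fin k), H ((k : ℝ) * a - π i0) ((k : ℝ) * b - π i1)

variable {k : ℕ} {i0 i1 : Fin k}

lemma factorial_cast_eq (hk : 2 ≤ k) :
    (k.factorial : ℝ) = (k : ℝ) * ((k : ℝ) - 1) * ((k - 2).factorial : ℝ) := by
  obtain ⟨n, rfl⟩ : ∃ n, k = n + 2 := ⟨k - 2, by omega⟩
  simp only [Nat.add_sub_cancel]
  rw [show n + 2 = (n + 1) + 1 by ring, Nat.factorial_succ, Nat.factorial_succ]
  push_cast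
  ring

lemma k_sub_one_pos (hk : 2 ≤ k) : (0 : ℝ) < (k : ℝ) - 1 := by
  have : (2 : ℝ) ≤ (k : ℝ) := by exact_mod_cast hk
  linarith

lemma stepOp_eq_offDiag (hk : 2 ≤ k) (hne : i0 ≠ i1) (H : ℝ → ℝ → ℝ) (a b : ℝ) :
    stepOp k i0 i1 H a b = ((k : ℝ) * ((k : ℝ) - 1))⁻¹ *
      ∑ p ∈ (univ : Finset (Fin k)).offDiag, H ((k : ℝ) * a - p.1) ((k : ℝ) * b - p.2) := by
  unfold stepOp
  rw [sum_perm_pair hk hne (fun i j => H ((k : ℝ) * a - i) ((k : ℝ) * b - j)), ← mul_assoc]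
  congr 1
  rw [factorial_cast_eq hk]
  have h1 : (0 : ℝ) < (k : ℝ) := by positivity
  have h2 := k_sub_one_pos hk
  have h3 : (0 : ℝ) < ((k - 2).factorial : ℝ) := by positivity
  field_simp

/-- uniqueness of the fractional index -/
lemma frac_index_unique {c : ℝ} {i j : Fin k} (hi : 0 < c - i ∧ c - i < 1)
    (hj : 0 < c - j ∧ c - j < 1) : i = j := by
  have h1 : ((i : ℕ) : ℝ) < (j : ℕ) + 1 := by linarith
  have h2 : ((j : ℕ) : ℝ) < (i : ℕ) + 1 := by linarith
  have h1' : (i : ℕ) < (j : ℕ) + 1 := by exact_mod_cast h1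
  have h2' : (j : ℕ) < (i : ℕ) + 1 := by exact_mod_cast h2
  exact Fin.ext (by omega)

lemma stepOp_contract (hk : 2 ≤ k) (hne : i0 ≠ i1) {H1 H2 : ℝ → ℝ → ℝ}
    (h1 : IsCop H1) (h2 : IsCop H2) {ε : ℝ} (hε : 0 ≤ ε)
    (hd : ∀ x y, |H1 x y - H2 x y| ≤ ε) (a b : ℝ) :
    |stepOp k i0 i1 H1 a b - stepOp k i0 i1 H2 a b| ≤ ((k : ℝ) * ((k : ℝ) - 1))⁻¹ * ε := by
  classical
  rw [stepOp_eq_offDiag hk hne, stepOp_eq_offDiag hk hne, ← mul_sub, ← Finset.sum_sub_distrib]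
  have hkpos : (0 : ℝ) < (k : ℝ) * ((k : ℝ) - 1) := by
    have := k_sub_one_pos hk
    have : (0:ℝ) < (k:ℝ) := by positivity
    nlinarith [k_sub_one_pos hk]
  rw [abs_mul, abs_of_nonneg (le_of_lt (inv_pos.2 hkpos))]
  refine mul_le_mul_of_nonneg_left ?_ (le_of_lt (inv_pos.2 hkpos))
  set D : ℝ → ℝ → ℝ := fun x y => H1 x y - H2 x y with hD
  have hDzero : ∀ x y, ¬((0 < x ∧ x < 1) ∧ (0 < y ∧ y < 1)) → D x y = 0 := by
    intro x y hxy
    simp only [hD]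
    rcases le_or_gt x 0 with hx | hx
    · rw [h1.left_zero hx, h2.left_zero hx, sub_zero]
    rcases le_or_gt 1 x with hx1 | hx1
    · rw [h1.left_one hx1, h2.left_one hx1, sub_self]
    rcases le_or_gt y 0 with hy | hy
    · rw [h1.right_zero _ hy, h2.right_zero _ hy, sub_zero]
    rcases le_or_gt 1 y with hy1 | hy1
    · rw [h1.right_one _ hy1, h2.right_one _ hy1, sub_self]
    exact absurd ⟨⟨hx, hx1⟩, ⟨hy, hy1⟩⟩ hxy
  calc |∑ p ∈ (univ : Finset (Fin k)).offDiag, D ((k:ℝ)*a - p.1) ((k:ℝ)*b - p.2)|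
      ≤ ∑ p ∈ (univ : Finset (Fin k)).offDiag, |D ((k:ℝ)*a - p.1) ((k:ℝ)*b - p.2)| :=
        Finset.abs_sum_le_sum_abs _ _
    _ ≤ ε := by
        set P : Fin k × Fin k → Prop := fun p =>
          (0 < (k:ℝ)*a - p.1 ∧ (k:ℝ)*a - p.1 < 1) ∧ (0 < (k:ℝ)*b - p.2 ∧ (k:ℝ)*b - p.2 < 1)
          with hP
        rw [← Finset.sum_filter_of_ne (p := P) (fun p _ hne0 => by
          by_contra hp
          exact hne0 (by rw [hDzero _ _ hp, abs_zero]))]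
        have hcard : ((univ : Finset (Fin k)).offDiag.filter P).card ≤ 1 := by
          rw [Finset.card_le_one]
          intro p hp q hq
          simp only [Finset.mem_filter, hP] at hp hq
          exact Prod.ext (frac_index_unique hp.2.1 hq.2.1) (frac_index_unique hp.2.2 hq.2.2)
        calc ∑ p ∈ (univ : Finset (Fin k)).offDiag.filter P,
              |D ((k:ℝ)*a - p.1) ((k:ℝ)*b - p.2)|
            ≤ ((univ : Finset (Fin k)).offDiag.filter P).card • ε :=
              Finset.sum_le_card_nsmul _ _ ε (fun p _ => hd _ _)
          _ ≤ 1 * ε := by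
              rw [nsmul_eq_mul]
              exact mul_le_mul_of_nonneg_right (by exact_mod_cast hcard) hε
          _ = ε := one_mul ε

/-! pointwise copula inequalities on [0,1] -/

section Pointwise
variable {x y : ℝ}

lemma pt_prod_le_min (hx0 : 0 ≤ x) (hx1 : x ≤ 1) (hy0 : 0 ≤ y) (hy1 : y ≤ 1) :
    x * y ≤ min x y := by
  rcases le_total x y with h | h
  · rw [min_eq_left h]; nlinarith
  · rw [min_eq_right h]; nlinarith

lemma pt_min_le_prod_add (hx0 : 0 ≤ x) (hx1 : x ≤ 1) (hy0 : 0 ≤ y) (hy1 : y ≤ 1) :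
    min x y ≤ x * y + min (x * (1 - x)) (y * (1 - y)) := by
  rcases le_total x y with h | h
  · rw [min_eq_left h]
    rcases le_total (x * (1 - x)) (y * (1 - y)) with h2 | h2
    · rw [min_eq_left h2]; nlinarith
    · rw [min_eq_right h2]; nlinarith
  · rw [min_eq_right h]
    rcases le_total (x * (1 - x)) (y * (1 - y)) with h2 | h2
    · rw [min_eq_left h2]; nlinarith
    · rw [min_eq_right h2]; nlinarith

lemma pt_prod_le_max_add (hx0 : 0 ≤ x) (hx1 : x ≤ 1) (hy0 : 0 ≤ y) (hy1 : y ≤ 1) :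
    x * y ≤ max (x + y - 1) 0 + min (x * (1 - x)) (y * (1 - y)) := by
  rcases le_total (x + y - 1) 0 with h | h
  · rw [max_eq_right h]
    rcases le_total (x * (1 - x)) (y * (1 - y)) with h2 | h2
    · rw [min_eq_left h2]; nlinarith
    · rw [min_eq_right h2]; nlinarith
  · rw [max_eq_left h]
    rcases le_total (x * (1 - x)) (y * (1 - y)) with h2 | h2
    · rw [min_eq_left h2]; nlinarith
    · rw [min_eq_right h2]; nlinarith

lemma pt_max_le_min (hx0 : 0 ≤ x) (hx1 : x ≤ 1) (hy0 : 0 ≤ y) (hy1 : y ≤ 1) :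
    max (x + y - 1) 0 ≤ min x y := by
  rcases le_total (x + y - 1) 0 with h | h
  · rw [max_eq_right h]; exact le_min hx0 hy0
  · rw [max_eq_left h]; exact le_min (by linarith) (by linarith)

lemma pt_self_quarter (hx0 : 0 ≤ x) (hx1 : x ≤ 1) : x * (1 - x) ≤ 1 / 4 := by nlinarith [sq_nonneg (x - 1/2)]

lemma pt_min_le_prod_add_quarter (hx0 : 0 ≤ x) (hx1 : x ≤ 1) (hy0 : 0 ≤ y) (hy1 : y ≤ 1) :
    min x y ≤ x * y + 1 / 4 := by
  have := pt_min_le_prod_add hx0 hx1 hy0 hy1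
  have h2 : min (x * (1 - x)) (y * (1 - y)) ≤ 1 / 4 :=
    (min_le_left _ _).trans (pt_self_quarter hx0 hx1)
  linarith

end Pointwise

/-- sum of products of fractional parts is at most 1/4 -/
lemma sum_min_frac_le_quarter {k : ℕ} (c d : ℝ) :
    ∑ p ∈ (univ : Finset (Fin k)) ×ˢ (univ : Finset (Fin k)),
      min (cl (c - p.1) * (1 - cl (c - p.1))) (cl (d - p.2) * (1 - cl (d - p.2))) ≤ 1 / 4 := by
  classical
  set f : Fin k → ℝ := fun i => cl (c - i) * (1 - cl (c - i)) with hf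
  set g : Fin k → ℝ := fun j => cl (d - j) * (1 - cl (d - j)) with hg
  have hf0 : ∀ i, 0 ≤ f i := fun i =>
    mul_nonneg (cl_nonneg _) (by linarith [cl_le_one (c - (i:ℝ))])
  have hg0 : ∀ j, 0 ≤ g j := fun j =>
    mul_nonneg (cl_nonneg _) (by linarith [cl_le_one (d - (j:ℝ))])
  set Q : Fin k × Fin k → Prop := fun p => f p.1 ≠ 0 ∧ g p.2 ≠ 0 with hQ
  have hzero : ∀ p ∈ (univ : Finset (Fin k)) ×ˢ univ,
      min (f p.1) (g p.2) ≠ 0 → Q p := by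
    intro p _ hne
    by_contra hq
    apply hne
    rcases not_and_or.1 hq with h | h
    · rw [not_not.1 h]; exact min_eq_left (hg0 p.2)
    · rw [not_not.1 h]; exact min_eq_right (hf0 p.1)
  rw [← Finset.sum_filter_of_ne hzero]
  have hcard : (((univ : Finset (Fin k)) ×ˢ univ).filter Q).card ≤ 1 := by
    rw [Finset.card_le_one]
    intro p hp q hq
    simp only [Finset.mem_filter, hQ] at hp hq
    have key : ∀ (e : ℝ) (i : Fin k), cl (e - i) * (1 - cl (e - i)) ≠ 0 →
        0 < e - i ∧ e - i < 1 := by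
      intro e i hne
      have h1 : cl (e - i) ≠ 0 := fun hc => hne (by rw [hc, zero_mul])
      have h2 : cl (e - i) ≠ 1 := fun hc => hne (by rw [hc]; ring)
      exact cl_mem_Ioo_of_ne h1 h2
    exact Prod.ext (frac_index_unique (key c p.1 hp.2.1) (key c q.1 hq.2.1))
      (frac_index_unique (key d p.2 hp.2.2) (key d q.2 hq.2.2))
  calc ∑ p ∈ ((univ : Finset (Fin k)) ×ˢ univ).filter Q, min (f p.1) (g p.2)
      ≤ (((univ : Finset (Fin k)) ×ˢ univ).filter Q).card • (1/4 : ℝ) := by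
        refine Finset.sum_le_card_nsmul _ _ _ fun p _ => ?_
        exact (min_le_left _ _).trans
          (pt_self_quarter (cl_nonneg _) (cl_le_one _))
    _ ≤ 1 * (1/4 : ℝ) := by
        rw [nsmul_eq_mul]
        exact mul_le_mul_of_nonneg_right (by exact_mod_cast hcard) (by norm_num)
    _ ≤ 1/4 := by norm_num

set_option maxHeartbeats 1000000 in
lemma stepOp_base {k : ℕ} {i0 i1 : Fin k} (hk : 2 ≤ k) (hne : i0 ≠ i1)
    {H : ℝ → ℝ → ℝ} (hH : IsCop H) (a b : ℝ) :
    |stepOp k i0 i1 H a b - cl a * cl b| ≤ (k : ℝ) / ((k : ℝ) - 1) ^ 2 := by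
  classical
  have hK : (2 : ℝ) ≤ (k : ℝ) := by exact_mod_cast hk
  have hK0 : (0 : ℝ) < (k : ℝ) := by linarith
  have hK1 : (0 : ℝ) < (k : ℝ) - 1 := by linarith
  set c := (k : ℝ) * a with hc
  set d := (k : ℝ) * b with hd
  set A : Fin k → ℝ := fun i => cl (c - i) with hA
  set B : Fin k → ℝ := fun j => cl (d - j) with hB
  have hA0 : ∀ i, 0 ≤ A i := fun i => cl_nonneg _
  have hA1 : ∀ i, A i ≤ 1 := fun i => cl_le_one _
  have hB0 : ∀ j, 0 ≤ B j := fun j => cl_nonneg _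
  have hB1 : ∀ j, B j ≤ 1 := fun j => cl_le_one _
  have hSA : ∑ i, A i = (k : ℝ) * cl a := sum_cl_mul a
  have hSB : ∑ j, B j = (k : ℝ) * cl b := sum_cl_mul b
  set P := cl a * cl b with hPdef
  have hP0 : 0 ≤ P := mul_nonneg (cl_nonneg _) (cl_nonneg _)
  -- Chebyshev
  have hAanti : Antitone A := by
    intro i j hij
    have hval : ((i : ℕ) : ℝ) ≤ ((j : ℕ) : ℝ) := by exact_mod_cast (Fin.le_def.1 hij)
    exact cl_mono (by linarith)
  have hBanti : Antitone B := by
    intro i j hij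
    have hval : ((i : ℕ) : ℝ) ≤ ((j : ℕ) : ℝ) := by exact_mod_cast (Fin.le_def.1 hij)
    exact cl_mono (by linarith)
  have hmono : Monovary A B := by
    intro i j hlt
    rcases le_total i j with hij | hji
    · exact absurd hlt (not_lt.2 (hBanti hij))
    · exact hAanti hji
  have hcheb : (∑ i, A i) * (∑ j, B j) ≤ (k : ℝ) * ∑ i, A i * B i := by
    have := hmono.sum_mul_sum_le_card_mul_sum
    simpa [Finset.card_univ, nsmul_eq_mul] using this
  -- product sums
  have hprodAB : ∑ p ∈ (univ : Finset (Fin k)) ×ˢ univ, A p.1 * B p.2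
      = (∑ i, A i) * (∑ j, B j) := by
    rw [Finset.sum_mul_sum]
    rw [Finset.sum_product]
  have hquarter := sum_min_frac_le_quarter (k := k) c d
  -- upper bound on the offDiag sum of min
  have hmin_prod : ∑ p ∈ (univ : Finset (Fin k)) ×ˢ univ, min (A p.1) (B p.2)
      ≤ (∑ i, A i) * (∑ j, B j) + 1/4 := by
    have h1 : ∑ p ∈ (univ : Finset (Fin k)) ×ˢ univ, min (A p.1) (B p.2)
        ≤ ∑ p ∈ (univ : Finset (Fin k)) ×ˢ univ,
            (A p.1 * B p.2 + min (A p.1 * (1 - A p.1)) (B p.2 * (1 - B p.2))) :=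
      Finset.sum_le_sum fun p _ =>
        pt_min_le_prod_add (hA0 _) (hA1 _) (hB0 _) (hB1 _)
    rw [Finset.sum_add_distrib, hprodAB] at h1
    exact h1.trans (by linarith)
  have hmax_prod : (∑ i, A i) * (∑ j, B j) - 1/4
      ≤ ∑ p ∈ (univ : Finset (Fin k)) ×ˢ univ, max (A p.1 + B p.2 - 1) 0 := by
    have h1 : ∑ p ∈ (univ : Finset (Fin k)) ×ˢ univ, A p.1 * B p.2
        ≤ ∑ p ∈ (univ : Finset (Fin k)) ×ˢ univ,
            (max (A p.1 + B p.2 - 1) 0 + min (A p.1 * (1 - A p.1)) (B p.2 * (1 - B p.2))) :=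
      Finset.sum_le_sum fun p _ =>
        pt_prod_le_max_add (hA0 _) (hA1 _) (hB0 _) (hB1 _)
    rw [Finset.sum_add_distrib, hprodAB] at h1
    linarith
  -- diagonal sums
  have hdiag_min_lo : (∑ i, A i) * (∑ j, B j) / (k:ℝ) ≤ ∑ i, min (A i) (B i) := by
    have h1 : ∑ i, A i * B i ≤ ∑ i, min (A i) (B i) :=
      Finset.sum_le_sum fun i _ => pt_prod_le_min (hA0 _) (hA1 _) (hB0 _) (hB1 _)
    rw [div_le_iff₀ hK0]
    calc (∑ i, A i) * (∑ j, B j) ≤ (k:ℝ) * ∑ i, A i * B i := hcheb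
      _ ≤ (k:ℝ) * ∑ i, min (A i) (B i) := by
          exact mul_le_mul_of_nonneg_left h1 (le_of_lt hK0)
      _ = (∑ i, min (A i) (B i)) * (k:ℝ) := by ring
  have hdiag_max_hi : ∑ i, max (A i + B i - 1) 0 ≤ (k:ℝ) * min (cl a) (cl b) := by
    have h1 : ∑ i, max (A i + B i - 1) 0 ≤ ∑ i, min (A i) (B i) :=
      Finset.sum_le_sum fun i _ => pt_max_le_min (hA0 _) (hA1 _) (hB0 _) (hB1 _)
    have h2 : ∑ i, min (A i) (B i) ≤ (k:ℝ) * min (cl a) (cl b) := by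
      rcases le_total (cl a) (cl b) with h | h
      · rw [min_eq_left h]
        calc ∑ i, min (A i) (B i) ≤ ∑ i, A i :=
              Finset.sum_le_sum fun i _ => min_le_left _ _
          _ = (k:ℝ) * cl a := hSA
      · rw [min_eq_right h]
        calc ∑ i, min (A i) (B i) ≤ ∑ i, B i :=
              Finset.sum_le_sum fun i _ => min_le_right _ _
          _ = (k:ℝ) * cl b := hSB
    linarith
  -- split product sum into diag and offDiag
  have hsplit_min : ∑ p ∈ (univ : Finset (Fin k)) ×ˢ univ, min (A p.1) (B p.2)
      = (∑ i, min (A i) (B i)) +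
        ∑ p ∈ (univ : Finset (Fin k)).offDiag, min (A p.1) (B p.2) := by
    rw [← Finset.diag_union_offDiag (univ : Finset (Fin k)),
      Finset.sum_union (Finset.disjoint_diag_offDiag _), Finset.sum_diag]
  have hsplit_max : ∑ p ∈ (univ : Finset (Fin k)) ×ˢ univ, max (A p.1 + B p.2 - 1) 0
      = (∑ i, max (A i + B i - 1) 0) +
        ∑ p ∈ (univ : Finset (Fin k)).offDiag, max (A p.1 + B p.2 - 1) 0 := by
    rw [← Finset.diag_union_offDiag (univ : Finset (Fin k)),
      Finset.sum_union (Finset.disjoint_diag_offDiag _), Finset.sum_diag]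
  -- bounds on the main sum
  set S := ∑ p ∈ (univ : Finset (Fin k)).offDiag, H (c - p.1) (d - p.2) with hS
  have hS_up : S ≤ (k:ℝ)^2 * P + 1/4 - (k:ℝ) * P := by
    have h1 : S ≤ ∑ p ∈ (univ : Finset (Fin k)).offDiag, min (A p.1) (B p.2) :=
      Finset.sum_le_sum fun p _ => le_min (hH _ _).2.1 (hH _ _).2.2.1
    have h2 : ∑ p ∈ (univ : Finset (Fin k)).offDiag, min (A p.1) (B p.2)
        ≤ (k:ℝ)^2 * P + 1/4 - (k:ℝ) * P := by
      have e1 : (∑ i, A i) * (∑ j, B j) = (k:ℝ)^2 * P := by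
        rw [hSA, hSB, hPdef]; ring
      have := hmin_prod
      rw [hsplit_min, e1] at this
      have := hdiag_min_lo
      rw [e1] at this
      have e2 : (k:ℝ)^2 * P / (k:ℝ) = (k:ℝ) * P := by
        field_simp
      rw [e2] at this
      linarith
    linarith
  have hS_lo : (k:ℝ)^2 * P - 1/4 - (k:ℝ) * min (cl a) (cl b) ≤ S := by
    have h1 : ∑ p ∈ (univ : Finset (Fin k)).offDiag, max (A p.1 + B p.2 - 1) 0 ≤ S := by
      refine Finset.sum_le_sum fun p _ => ?_
      rcases le_total (A p.1 + B p.2 - 1) 0 with h | h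
      · rw [max_eq_right h]; exact (hH _ _).1
      · rw [max_eq_left h]; linarith [(hH (c - (p.1:ℝ)) (d - (p.2:ℝ))).2.2.2]
    have e1 : (∑ i, A i) * (∑ j, B j) = (k:ℝ)^2 * P := by
      rw [hSA, hSB, hPdef]; ring
    have h2 := hmax_prod
    rw [hsplit_max, e1] at h2
    linarith [hdiag_max_hi]
  -- conclude
  rw [stepOp_eq_offDiag hk hne, ← hc, ← hd, ← hS]
  have hκ : ((k:ℝ) * ((k:ℝ) - 1))⁻¹ = 1 / ((k:ℝ) * ((k:ℝ)-1)) := by rw [one_div]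
  have hden : (0:ℝ) < (k:ℝ) * ((k:ℝ) - 1) := by positivity
  have hminP : min (cl a) (cl b) - P ≤ 1/4 := by
    have := pt_min_le_prod_add_quarter (cl_nonneg a) (cl_le_one a) (cl_nonneg b) (cl_le_one b)
    rw [hPdef]; linarith
  rw [abs_le]
  have hκS_lo := mul_le_mul_of_nonneg_left hS_lo (le_of_lt (inv_pos.2 hden))
  have hκS_up := mul_le_mul_of_nonneg_left hS_up (le_of_lt (inv_pos.2 hden))
  constructor
  · -- lower bound
    have hmain : P - ((k:ℝ) * ((k:ℝ)-1))⁻¹ * ((k:ℝ)^2 * P - 1/4 - (k:ℝ) * min (cl a) (cl b))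
        ≤ (k:ℝ) / ((k:ℝ)-1)^2 := by
      have hexp : P - ((k:ℝ) * ((k:ℝ)-1))⁻¹ * ((k:ℝ)^2 * P - 1/4 - (k:ℝ) * min (cl a) (cl b))
          = 1/(4*(k:ℝ)*((k:ℝ)-1)) + (min (cl a) (cl b) - P)/((k:ℝ)-1) := by
        field_simp
        ring
      rw [hexp]
      have t2 : (min (cl a) (cl b) - P)/((k:ℝ)-1) ≤ (1/4)/((k:ℝ)-1) :=
        (div_le_div_iff_of_pos_right hK1).2 (by linarith)
      have t3 : 1/(4*(k:ℝ)*((k:ℝ)-1)) + (1/4)/((k:ℝ)-1) = ((k:ℝ)+1)/(4*(k:ℝ)*((k:ℝ)-1)) := by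
        field_simp
        ring
      have t4 : ((k:ℝ)+1)/(4*(k:ℝ)*((k:ℝ)-1)) ≤ (k:ℝ) / ((k:ℝ)-1)^2 := by
        rw [div_le_div_iff₀ (by positivity) (by positivity)]
        nlinarith
      linarith
    linarith
  · -- upper bound
    have key : ((k:ℝ) * ((k:ℝ)-1))⁻¹ * ((k:ℝ)^2 * P + 1/4 - (k:ℝ) * P) - P
        = 1 / (4 * (k:ℝ) * ((k:ℝ)-1)) := by
      field_simp
      ring
    have t5 : 1 / (4 * (k:ℝ) * ((k:ℝ)-1)) ≤ (k:ℝ) / ((k:ℝ)-1)^2 := by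
      rw [div_le_div_iff₀ (by positivity) (by positivity)]
      nlinarith
    linarith

end Analytic

/-! ### Measure-theoretic layer -/

section Measure

variable {Ω : Type*} [MeasurableSpace Ω] {μ : Measure Ω} [IsProbabilityMeasure μ]
  {k : ℕ} {U0 : Fin k → Ω → ℝ} {σ : ℕ → Ω → Equiv.Perm (Fin k)}

/-- deterministic version of the recursion -/
noncomputable def ilhsD (k : ℕ) (u : ℝ) (τ : ℕ → ℕ) : ℕ → ℝ
  | 0 => u
  | t + 1 => ((τ t : ℝ) + ilhsD k u τ t) / k

lemma ilhs_eq_ilhsD (t : ℕ) (j : Fin k) (ω : Ω) :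
    ilhs U0 σ t j ω = ilhsD k (U0 j ω) (fun s => (σ s ω j : ℕ)) t := by
  induction t with
  | zero => rfl
  | succ t ih => simp only [ilhs, ilhsD, ih]

lemma ilhsD_congr {u : ℝ} {τ τ' : ℕ → ℕ} (t : ℕ) (h : ∀ r < t, τ r = τ' r) :
    ilhsD k u τ t = ilhsD k u τ' t := by
  induction t with
  | zero => rfl
  | succ t ih =>
    simp only [ilhsD]
    rw [ih (fun r hr => h r (by omega)), h t (by omega)]

lemma measurable_ilhsD {X : Type*} [MeasurableSpace X] {f : X → ℝ} (hf : Measurable f)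
    {g : ℕ → X → ℕ} (hg : ∀ r, Measurable (g r)) (t : ℕ) :
    Measurable fun x => ilhsD k (f x) (fun r => g r x) t := by
  induction t with
  | zero => exact hf
  | succ t ih =>
    simp only [ilhsD]
    exact (((measurable_from_top.comp (hg t)).add ih).div_const _)

lemma meas_ilhs (h : IsILHS μ U0 σ) (t : ℕ) (j : Fin k) :
    Measurable (ilhs U0 σ t j) := by
  induction t with
  | zero => exact h.1 j
  | succ t ih =>
    have hev : Measurable fun π : Equiv.Perm (Fin k) => ((π j : ℕ) : ℝ) :=
      measurable_from_top
    exact ((hev.comp (h.2.1 t)).add ih).div_const _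

lemma ae_ilhs_mem (h : IsILHS μ U0 σ) (t : ℕ) (j : Fin k) :
    ∀ᵐ ω ∂μ, ilhs U0 σ t j ω ∈ Set.Ioo (0 : ℝ) 1 := by
  induction t with
  | zero =>
    have hmap : μ.map (U0 j) (Set.Ioo (0:ℝ) 1)ᶜ = 0 := by
      rw [h.2.2.1 j, Measure.restrict_apply (measurableSet_Ioo.compl)]
      simp
    rw [Measure.map_apply (h.1 j) (measurableSet_Ioo (a := (0:ℝ)) (b := 1)).compl] at hmap
    rw [ae_iff]
    exact hmap
  | succ t ih =>
    filter_upwards [ih] with ω hω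
    have hk0 : 0 < k := j.pos
    have hk0' : (0:ℝ) < (k:ℝ) := by exact_mod_cast hk0
    have hσlt : ((σ t ω j : ℕ) : ℝ) < k := by exact_mod_cast (σ t ω j).isLt
    have hσ0 : (0:ℝ) ≤ ((σ t ω j : ℕ) : ℝ) := by positivity
    have h1 : ((σ t ω j : ℕ) : ℝ) ≤ (k:ℝ) - 1 := by
      have : (σ t ω j : ℕ) ≤ k - 1 := by omega
      have := (Nat.cast_le (α := ℝ)).2 this
      rw [Nat.cast_sub (by omega)] at this
      simpa using this
    constructor
    · show 0 < (((σ t ω j : ℕ) : ℝ) + ilhs U0 σ t j ω) / (k:ℝ)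
      apply div_pos _ hk0'
      have := hω.1
      linarith
    · show (((σ t ω j : ℕ) : ℝ) + ilhs U0 σ t j ω) / (k:ℝ) < 1
      rw [div_lt_one hk0']
      have := hω.2
      linarith

lemma indep_step (h : IsILHS μ U0 σ) (s : ℕ) (j0 j1 : Fin k) :
    IndepFun (σ s) (fun ω => (ilhs U0 σ s j0 ω, ilhs U0 σ s j1 ω)) μ := by
  classical
  set T : Finset (Fin k ⊕ ℕ) :=
    insert (Sum.inl j0) (insert (Sum.inl j1) ((Finset.range s).image Sum.inr)) with hT
  have hmem0 : (Sum.inl j0 : Fin k ⊕ ℕ) ∈ T := by simp [hT]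
  have hmem1 : (Sum.inl j1 : Fin k ⊕ ℕ) ∈ T := by simp [hT]
  have hmemr : ∀ r, r < s → (Sum.inr r : Fin k ⊕ ℕ) ∈ T := by
    intro r hr; simp [hT, hr]
  have hdis : Disjoint ({Sum.inr s} : Finset (Fin k ⊕ ℕ)) T := by
    rw [Finset.disjoint_left]
    intro x hx
    rw [Finset.mem_singleton] at hx
    subst hx
    simp [hT]
  have hmeas : ∀ i, Measurable (ilhsFam U0 σ i) := by
    rintro (j | t)
    · exact h.1 j
    · exact h.2.1 t
  have hbase := h.2.2.2.2.indepFun_finset {Sum.inr s} T hdis hmeas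
  set φ : (∀ i : ({Sum.inr s} : Finset (Fin k ⊕ ℕ)), ilhsβ k i) → Equiv.Perm (Fin k) :=
    fun x => x ⟨Sum.inr s, Finset.mem_singleton_self _⟩ with hφdef
  have hτmeas : ∀ (j : Fin k) (r : ℕ), Measurable fun x : (∀ i : (T : Finset (Fin k ⊕ ℕ)), ilhsβ k i) =>
      (if hr : (Sum.inr r : Fin k ⊕ ℕ) ∈ T then
        ((show Equiv.Perm (Fin k) from x ⟨Sum.inr r, hr⟩) j : ℕ) else 0) := by
    intro j r
    by_cases hr : (Sum.inr r : Fin k ⊕ ℕ) ∈ T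
    · simp only [dif_pos hr]
      have hev : Measurable fun x : (∀ i : (T : Finset (Fin k ⊕ ℕ)), ilhsβ k i) =>
          (show Equiv.Perm (Fin k) from x ⟨Sum.inr r, hr⟩) :=
        measurable_pi_apply _
      have hout : Measurable fun π : Equiv.Perm (Fin k) => ((π j : ℕ)) := measurable_from_top
      exact hout.comp hev
    · simp only [dif_neg hr]
      exact measurable_const
  set ψ : (∀ i : (T : Finset (Fin k ⊕ ℕ)), ilhsβ k i) → ℝ × ℝ := fun x =>
    (ilhsD k (x ⟨Sum.inl j0, hmem0⟩)
        (fun r => if hr : (Sum.inr r : Fin k ⊕ ℕ) ∈ T then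
          ((show Equiv.Perm (Fin k) from x ⟨Sum.inr r, hr⟩) j0 : ℕ) else 0) s,
     ilhsD k (x ⟨Sum.inl j1, hmem1⟩)
        (fun r => if hr : (Sum.inr r : Fin k ⊕ ℕ) ∈ T then
          ((show Equiv.Perm (Fin k) from x ⟨Sum.inr r, hr⟩) j1 : ℕ) else 0) s)
    with hψdef
  have hφ : Measurable φ := measurable_pi_apply _
  have hψ : Measurable ψ := by
    refine Measurable.prod ?_ ?_
    · exact measurable_ilhsD (measurable_pi_apply _) (hτmeas j0) s
    · exact measurable_ilhsD (measurable_pi_apply _) (hτmeas j1) s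
  have hcomp := hbase.comp hφ hψ
  have hfun1 : (φ ∘ fun ω (i : ({Sum.inr s} : Finset (Fin k ⊕ ℕ))) => ilhsFam U0 σ i ω) = σ s := rfl
  have hfun2 : (ψ ∘ fun ω (i : (T : Finset (Fin k ⊕ ℕ))) => ilhsFam U0 σ i ω)
      = fun ω => (ilhs U0 σ s j0 ω, ilhs U0 σ s j1 ω) := by
    funext ω
    show (ilhsD k (U0 j0 ω) _ s, ilhsD k (U0 j1 ω) _ s) = _
    rw [ilhs_eq_ilhsD s j0 ω, ilhs_eq_ilhsD s j1 ω]
    refine Prod.ext ?_ ?_ <;>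
    · refine ilhsD_congr s fun r hr => ?_
      rw [dif_pos (hmemr r hr)]
      rfl
  rw [hfun1, hfun2] at hcomp
  exact hcomp

end Measure

section MeasureRec

variable {Ω : Type*} [MeasurableSpace Ω] {μ : Measure Ω} [IsProbabilityMeasure μ]
  {k : ℕ} {U0 : Fin k → Ω → ℝ} {σ : ℕ → Ω → Equiv.Perm (Fin k)}

lemma measure_step (h : IsILHS μ U0 σ) (s : ℕ) (j0 j1 : Fin k) (a b : ℝ) :
    μ {ω | ilhs U0 σ (s+1) j0 ω ≤ a ∧ ilhs U0 σ (s+1) j1 ω ≤ b}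
      = ∑ π : Equiv.Perm (Fin k), ((k.factorial : ENNReal))⁻¹ *
          μ {ω | ilhs U0 σ s j0 ω ≤ (k:ℝ)*a - π j0 ∧ ilhs U0 σ s j1 ω ≤ (k:ℝ)*b - π j1} := by
  classical
  have hk0 : (0:ℝ) < (k:ℝ) := by exact_mod_cast j0.pos
  have hset : {ω | ilhs U0 σ (s+1) j0 ω ≤ a ∧ ilhs U0 σ (s+1) j1 ω ≤ b}
      = ⋃ π : Equiv.Perm (Fin k), (σ s ⁻¹' {π} ∩
          (fun ω => (ilhs U0 σ s j0 ω, ilhs U0 σ s j1 ω)) ⁻¹'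
            {p : ℝ × ℝ | p.1 ≤ (k:ℝ)*a - π j0 ∧ p.2 ≤ (k:ℝ)*b - π j1}) := by
    ext ω
    have e0 : ilhs U0 σ (s+1) j0 ω = (((σ s ω j0 : ℕ):ℝ) + ilhs U0 σ s j0 ω) / k := rfl
    have e1 : ilhs U0 σ (s+1) j1 ω = (((σ s ω j1 : ℕ):ℝ) + ilhs U0 σ s j1 ω) / k := rfl
    simp only [Set.mem_setOf_eq, Set.mem_iUnion, Set.mem_inter_iff, Set.mem_preimage,
      Set.mem_singleton_iff, e0, e1, div_le_iff₀ hk0]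
    constructor
    · rintro ⟨h1, h2⟩
      exact ⟨σ s ω, rfl, by linarith, by linarith⟩
    · rintro ⟨π, rfl, h1, h2⟩
      exact ⟨by linarith, by linarith⟩
  have hmeas_pair : Measurable fun ω => (ilhs U0 σ s j0 ω, ilhs U0 σ s j1 ω) :=
    (meas_ilhs h s j0).prodMk (meas_ilhs h s j1)
  have hBmeas : ∀ c d : ℝ, MeasurableSet {p : ℝ × ℝ | p.1 ≤ c ∧ p.2 ≤ d} := by
    intro c d
    have : {p : ℝ × ℝ | p.1 ≤ c ∧ p.2 ≤ d} = {p : ℝ × ℝ | p.1 ≤ c} ∩ {p | p.2 ≤ d} := rfl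
    rw [this]
    exact (measurableSet_le measurable_fst measurable_const).inter
      (measurableSet_le measurable_snd measurable_const)
  have hdisj : Pairwise (Function.onFun Disjoint fun π : Equiv.Perm (Fin k) =>
      σ s ⁻¹' {π} ∩ (fun ω => (ilhs U0 σ s j0 ω, ilhs U0 σ s j1 ω)) ⁻¹'
        {p : ℝ × ℝ | p.1 ≤ (k:ℝ)*a - π j0 ∧ p.2 ≤ (k:ℝ)*b - π j1}) := by
    intro π π' hne
    refine Set.disjoint_left.2 fun ω hω hω' => hne ?_
    have h1 : σ s ω = π := hω.1
    have h2 : σ s ω = π' := hω'.1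
    rw [← h1, ← h2]
  have hmeasv : ∀ π : Equiv.Perm (Fin k), MeasurableSet
      (σ s ⁻¹' {π} ∩ (fun ω => (ilhs U0 σ s j0 ω, ilhs U0 σ s j1 ω)) ⁻¹'
        {p : ℝ × ℝ | p.1 ≤ (k:ℝ)*a - π j0 ∧ p.2 ≤ (k:ℝ)*b - π j1}) := fun π =>
    ((h.2.1 s) (MeasurableSpace.measurableSet_top)).inter (hmeas_pair (hBmeas _ _))
  rw [hset, measure_iUnion hdisj hmeasv, tsum_fintype]
  refine Finset.sum_congr rfl fun π _ => ?_
  rw [(indep_step h s j0 j1).measure_inter_preimage_eq_mul _ _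
    MeasurableSpace.measurableSet_top (hBmeas _ _)]
  have hpre : σ s ⁻¹' {π} = {ω | σ s ω = π} := by ext ω; simp
  rw [hpre, h.2.2.2.1 s π]
  rfl

/-- the joint CDF at time `s` -/
noncomputable def Gfun (μ : Measure Ω) (U0 : Fin k → Ω → ℝ) (σ : ℕ → Ω → Equiv.Perm (Fin k))
    (j0 j1 : Fin k) (s : ℕ) (a b : ℝ) : ℝ :=
  (μ {ω | ilhs U0 σ s j0 ω ≤ a ∧ ilhs U0 σ s j1 ω ≤ b}).toReal

lemma Gfun_succ (h : IsILHS μ U0 σ) (s : ℕ) (j0 j1 : Fin k) (a b : ℝ) :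
    Gfun μ U0 σ j0 j1 (s+1) a b = stepOp k j0 j1 (Gfun μ U0 σ j0 j1 s) a b := by
  classical
  rw [Gfun, measure_step h s j0 j1 a b, stepOp]
  rw [ENNReal.toReal_sum (fun π _ => ?_)]
  · rw [Finset.mul_sum]
    refine Finset.sum_congr rfl fun π _ => ?_
    rw [ENNReal.toReal_mul, ENNReal.toReal_inv]
    rfl
  · exact ENNReal.mul_ne_top (by simp [Nat.factorial_ne_zero]) (measure_ne_top μ _)

lemma pair_big_right (h : IsILHS μ U0 σ) (s : ℕ) (j0 j1 : Fin k) (a : ℝ) {b : ℝ} (hb : 1 ≤ b) :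
    μ {ω | ilhs U0 σ s j0 ω ≤ a ∧ ilhs U0 σ s j1 ω ≤ b}
      = μ {ω | ilhs U0 σ s j0 ω ≤ a} := by
  have hY : ∀ᵐ ω ∂μ, ilhs U0 σ s j1 ω ≤ b := by
    filter_upwards [ae_ilhs_mem h s j1] with ω hω
    exact le_trans (le_of_lt hω.2) hb
  apply measure_congr
  filter_upwards [hY] with ω hω
  simp only [eq_iff_iff, Set.mem_setOf_eq]
  exact ⟨fun hc => hc.1, fun hc => ⟨hc, hω⟩⟩

lemma pair_big_left (h : IsILHS μ U0 σ) (s : ℕ) (j0 j1 : Fin k) {a : ℝ} (ha : 1 ≤ a) (b : ℝ) :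
    μ {ω | ilhs U0 σ s j0 ω ≤ a ∧ ilhs U0 σ s j1 ω ≤ b}
      = μ {ω | ilhs U0 σ s j1 ω ≤ b} := by
  have hX : ∀ᵐ ω ∂μ, ilhs U0 σ s j0 ω ≤ a := by
    filter_upwards [ae_ilhs_mem h s j0] with ω hω
    exact le_trans (le_of_lt hω.2) ha
  apply measure_congr
  filter_upwards [hX] with ω hω
  simp only [eq_iff_iff, Set.mem_setOf_eq]
  exact ⟨fun hc => hc.2, fun hc => ⟨hω, hc⟩⟩

lemma marg_base (h : IsILHS μ U0 σ) (j : Fin k) (a : ℝ) :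
    μ {ω | ilhs U0 σ 0 j ω ≤ a} = ENNReal.ofReal (cl a) := by
  have : μ {ω | ilhs U0 σ 0 j ω ≤ a} = μ.map (U0 j) (Set.Iic a) := by
    rw [Measure.map_apply (h.1 j) measurableSet_Iic]
    rfl
  rw [this, h.2.2.1 j, Measure.restrict_apply measurableSet_Iic]
  rcases le_total a 0 with ha | ha
  · have : Set.Iic a ∩ Set.Ioo (0:ℝ) 1 = ∅ := by
      ext x
      simp only [Set.mem_inter_iff, Set.mem_Iic, Set.mem_Ioo, Set.mem_empty_iff_false,
        iff_false]
      rintro ⟨h1, h2, h3⟩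
      linarith
    rw [this, cl_of_nonpos ha]
    simp
  rcases le_or_gt 1 a with ha1 | ha1
  · have : Set.Iic a ∩ Set.Ioo (0:ℝ) 1 = Set.Ioo 0 1 := by
      ext x
      simp only [Set.mem_inter_iff, Set.mem_Iic, Set.mem_Ioo]
      constructor
      · rintro ⟨h1, h2⟩; exact h2
      · intro hx; exact ⟨by linarith [hx.2], hx⟩
    rw [this, cl_of_one_le ha1, Real.volume_Ioo]
    norm_num
  · have : Set.Iic a ∩ Set.Ioo (0:ℝ) 1 = Set.Ioc 0 a := by
      ext x
      simp only [Set.mem_inter_iff, Set.mem_Iic, Set.mem_Ioo, Set.mem_Ioc]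
      constructor
      · rintro ⟨h1, h2, h3⟩; exact ⟨h2, h1⟩
      · rintro ⟨h1, h2⟩; exact ⟨h2, h1, by linarith⟩
    rw [this, cl_of_mem ha (le_of_lt ha1), Real.volume_Ioc]
    simp

lemma marg (h : IsILHS μ U0 σ) (hk : 2 ≤ k) (j0 j1 : Fin k) (hne : j0 ≠ j1) :
    ∀ s a, (μ {ω | ilhs U0 σ s j0 ω ≤ a}).toReal = cl a := by
  intro s
  induction s with
  | zero => intro a; rw [marg_base h j0 a, ENNReal.toReal_ofReal (cl_nonneg a)]
  | succ s ih =>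
    intro a
    have hK : (2:ℝ) ≤ (k:ℝ) := by exact_mod_cast hk
    have hbig : (1:ℝ) ≤ 2 := by norm_num
    have e1 : (μ {ω | ilhs U0 σ (s+1) j0 ω ≤ a}).toReal
        = Gfun μ U0 σ j0 j1 (s+1) a 2 := by
      rw [Gfun, pair_big_right h (s+1) j0 j1 a hbig]
    rw [e1, Gfun_succ h s j0 j1 a 2, stepOp]
    have hterm : ∀ π : Equiv.Perm (Fin k),
        Gfun μ U0 σ j0 j1 s ((k:ℝ)*a - π j0) ((k:ℝ)*2 - π j1) = cl ((k:ℝ)*a - π j0) := by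
      intro π
      have hval : ((π j1 : ℕ) : ℝ) < (k:ℝ) := by exact_mod_cast (π j1).isLt
      have hbig2 : (1:ℝ) ≤ (k:ℝ)*2 - π j1 := by linarith
      rw [Gfun, pair_big_right h s j0 j1 _ hbig2, ih]
    simp only [hterm]
    rw [sum_perm_single hk j0 (fun i => cl ((k:ℝ)*a - i)), sum_cl_mul]
    have hfac : (k.factorial : ℝ) = (k:ℝ) * ((k-1).factorial : ℝ) := by
      obtain ⟨n, hn⟩ : ∃ n, k = n + 1 := ⟨k - 1, by omega⟩
      subst hn
      simp only [Nat.add_sub_cancel, Nat.factorial_succ]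
      push_cast
      ring
    rw [hfac]
    have h1 : (0:ℝ) < (k:ℝ) := by linarith
    have h2 : (0:ℝ) < ((k-1).factorial : ℝ) := by positivity
    field_simp

end MeasureRec

section Assemble

variable {Ω : Type*} [MeasurableSpace Ω] {μ : Measure Ω} [IsProbabilityMeasure μ]
  {k : ℕ} {U0 : Fin k → Ω → ℝ} {σ : ℕ → Ω → Equiv.Perm (Fin k)}

lemma isCop_Gfun (h : IsILHS μ U0 σ) (hk : 2 ≤ k) {j0 j1 : Fin k} (hne : j0 ≠ j1) (s : ℕ) :
    IsCop (Gfun μ U0 σ j0 j1 s) := by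
  intro a b
  have hXm := meas_ilhs h s j0
  have hYm := meas_ilhs h s j1
  have hA : MeasurableSet {ω | ilhs U0 σ s j0 ω ≤ a} := measurableSet_le hXm measurable_const
  have hB : MeasurableSet {ω | ilhs U0 σ s j1 ω ≤ b} := measurableSet_le hYm measurable_const
  have hsplit : {ω | ilhs U0 σ s j0 ω ≤ a ∧ ilhs U0 σ s j1 ω ≤ b}
      = {ω | ilhs U0 σ s j0 ω ≤ a} ∩ {ω | ilhs U0 σ s j1 ω ≤ b} := rfl
  have hma : (μ {ω | ilhs U0 σ s j0 ω ≤ a}).toReal = cl a := marg h hk j0 j1 hne s a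
  have hmb : (μ {ω | ilhs U0 σ s j1 ω ≤ b}).toReal = cl b := marg h hk j1 j0 hne.symm s b
  refine ⟨ENNReal.toReal_nonneg, ?_, ?_, ?_⟩
  · rw [Gfun, ← hma]
    exact ENNReal.toReal_mono (measure_ne_top μ _)
      (measure_mono fun ω hω => hω.1)
  · rw [Gfun, ← hmb]
    exact ENNReal.toReal_mono (measure_ne_top μ _)
      (measure_mono fun ω hω => hω.2)
  · have hunion := measure_union_add_inter {ω | ilhs U0 σ s j0 ω ≤ a} hB (μ := μ)
    have htr := congrArg ENNReal.toReal hunion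
    rw [ENNReal.toReal_add (measure_ne_top μ _) (measure_ne_top μ _),
      ENNReal.toReal_add (measure_ne_top μ _) (measure_ne_top μ _), hma, hmb] at htr
    have hle1 : (μ ({ω | ilhs U0 σ s j0 ω ≤ a} ∪ {ω | ilhs U0 σ s j1 ω ≤ b})).toReal ≤ 1 := by
      have := prob_le_one (μ := μ) (s := {ω | ilhs U0 σ s j0 ω ≤ a} ∪ {ω | ilhs U0 σ s j1 ω ≤ b})
      have := ENNReal.toReal_mono (by simp) this
      simpa using this
    rw [Gfun, hsplit]
    linarith
  
lemma Gfun_zero (h : IsILHS μ U0 σ) (hk : 2 ≤ k) {j0 j1 : Fin k} (hne : j0 ≠ j1) (a b : ℝ) :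
    Gfun μ U0 σ j0 j1 0 a b = cl a * cl b := by
  have hind : IndepFun (U0 j0) (U0 j1) μ := by
    have hij : (Sum.inl j0 : Fin k ⊕ ℕ) ≠ Sum.inl j1 := by
      intro hc
      exact hne (by injection hc)
    exact h.2.2.2.2.indepFun hij
  have hmul := hind.measure_inter_preimage_eq_mul (Set.Iic a) (Set.Iic b)
    measurableSet_Iic measurableSet_Iic
  have hset : {ω | ilhs U0 σ 0 j0 ω ≤ a ∧ ilhs U0 σ 0 j1 ω ≤ b}
      = U0 j0 ⁻¹' (Set.Iic a) ∩ U0 j1 ⁻¹' (Set.Iic b) := rfl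
  rw [Gfun, hset, hmul, ENNReal.toReal_mul]
  have e0 : U0 j0 ⁻¹' (Set.Iic a) = {ω | ilhs U0 σ 0 j0 ω ≤ a} := rfl
  have e1 : U0 j1 ⁻¹' (Set.Iic b) = {ω | ilhs U0 σ 0 j1 ω ≤ b} := rfl
  rw [e0, e1, marg h hk j0 j1 hne 0 a, marg h hk j1 j0 hne.symm 0 b]

lemma atom_zero (h : IsILHS μ U0 σ) (hk : 2 ≤ k) {j0 j1 : Fin k} (hne : j0 ≠ j1) (s : ℕ)
    (c : ℝ) : μ {ω | ilhs U0 σ s j0 ω = c} = 0 := by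
  have hM : ∀ a, μ {ω | ilhs U0 σ s j0 ω ≤ a} = ENNReal.ofReal (cl a) := by
    intro a
    rw [← marg h hk j0 j1 hne s a, ENNReal.ofReal_toReal (measure_ne_top μ _)]
  refine le_antisymm ?_ zero_le
  refine ENNReal.le_of_forall_pos_le_add fun ε hε _ => ?_
  have hδ : (0:ℝ) < (ε:ℝ) / 2 := by
    have : (0:ℝ) < (ε:ℝ) := by exact_mod_cast hε
    linarith
  set δ : ℝ := (ε:ℝ)/2 with hδdef
  have hsub : {ω | ilhs U0 σ s j0 ω = c}
      ⊆ {ω | ilhs U0 σ s j0 ω ≤ c} \ {ω | ilhs U0 σ s j0 ω ≤ c - δ} := by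
    intro ω hω
    simp only [Set.mem_setOf_eq] at hω
    constructor
    · exact le_of_eq hω
    · simp only [Set.mem_setOf_eq, hω]
      linarith
  have hmono : {ω | ilhs U0 σ s j0 ω ≤ c - δ} ⊆ {ω | ilhs U0 σ s j0 ω ≤ c} := by
    intro ω hω
    simp only [Set.mem_setOf_eq] at hω ⊢
    linarith
  have hd : μ ({ω | ilhs U0 σ s j0 ω ≤ c} \ {ω | ilhs U0 σ s j0 ω ≤ c - δ})
      = ENNReal.ofReal (cl c) - ENNReal.ofReal (cl (c - δ)) := by
    rw [measure_diff hmono (measurableSet_le (meas_ilhs h s j0) measurable_const).nullMeasurableSet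
      (measure_ne_top μ _), hM, hM]
  have hlip : cl c - cl (c - δ) ≤ δ := by
    have := cl_lipschitz c (c - δ)
    have h2 : |c - (c - δ)| = δ := by
      rw [show c - (c - δ) = δ by ring, abs_of_pos hδ]
    rw [h2] at this
    exact (abs_le.1 this).2
  calc μ {ω | ilhs U0 σ s j0 ω = c}
      ≤ μ ({ω | ilhs U0 σ s j0 ω ≤ c} \ {ω | ilhs U0 σ s j0 ω ≤ c - δ}) := measure_mono hsub
    _ = ENNReal.ofReal (cl c) - ENNReal.ofReal (cl (c - δ)) := hd
    _ ≤ ENNReal.ofReal (cl c - cl (c - δ)) := by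
        rw [ENNReal.ofReal_sub _ (cl_nonneg _)]
    _ ≤ ENNReal.ofReal δ := ENNReal.ofReal_le_ofReal hlip
    _ ≤ 0 + ε := by
        rw [zero_add, hδdef]
        calc ENNReal.ofReal ((ε:ℝ)/2) ≤ ENNReal.ofReal (ε:ℝ) :=
              ENNReal.ofReal_le_ofReal (by linarith)
          _ = (ε : ENNReal) := ENNReal.ofReal_coe_nnreal

lemma main_bound (h : IsILHS μ U0 σ) (hk : 2 ≤ k) {j0 j1 : Fin k} (hne : j0 ≠ j1)
    {m : ℕ} (hm : 1 ≤ m) :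
    ∀ t, ∀ a b : ℝ, |Gfun μ U0 σ j0 j1 (t+m) a b - Gfun μ U0 σ j0 j1 t a b|
      ≤ (k:ℝ) ^ (1 - (t:ℤ)) * ((k:ℝ) - 1) ^ (-((t:ℤ) + 2)) := by
  have hK : (2:ℝ) ≤ (k:ℝ) := by exact_mod_cast hk
  have hk0 : (k:ℝ) ≠ 0 := by linarith
  have hk1 : ((k:ℝ) - 1) ≠ 0 := by linarith
  have hk0' : (0:ℝ) < (k:ℝ) := by linarith
  have hk1' : (0:ℝ) < (k:ℝ) - 1 := by linarith
  intro t
  induction t with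
  | zero =>
    intro a b
    obtain ⟨m', rfl⟩ : ∃ m', m = m' + 1 := ⟨m - 1, by omega⟩
    rw [show (0:ℕ) + (m'+1) = m'+1 by omega, Gfun_succ h m' j0 j1 a b,
      Gfun_zero h hk hne a b]
    have hb := stepOp_base hk hne (isCop_Gfun h hk hne m') a b
    refine hb.trans (le_of_eq ?_)
    rw [show (1 - ((0:ℕ):ℤ)) = (1:ℤ) by norm_num, show (-(((0:ℕ):ℤ) + 2)) = (-2:ℤ) by norm_num,
      zpow_one]
    rw [zpow_neg, div_eq_mul_inv]
    congr 2
  | succ t ih =>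
    intro a b
    rw [show t + 1 + m = (t + m) + 1 by omega, Gfun_succ h (t+m) j0 j1 a b,
      Gfun_succ h t j0 j1 a b]
    have hεpos : (0:ℝ) ≤ (k:ℝ) ^ (1 - (t:ℤ)) * ((k:ℝ) - 1) ^ (-((t:ℤ) + 2)) := by positivity
    have hc := stepOp_contract hk hne (isCop_Gfun h hk hne (t+m)) (isCop_Gfun h hk hne t)
      hεpos (fun x y => ih x y) a b
    refine hc.trans (le_of_eq ?_)
    rw [mul_inv, ← zpow_neg_one ((k:ℝ)), ← zpow_neg_one ((k:ℝ) - 1), mul_mul_mul_comm,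
      ← zpow_add₀ hk0, ← zpow_add₀ hk1]
    congr 1
    · congr 1
      push_cast
      ring
    · congr 1
      push_cast
      ring

lemma threshold {g : ℝ → ℝ} (hg : MonotoneOn g (Set.Icc (0:ℝ) 1)) (u : ℝ)
    {x : ℝ} (hx : x ∈ Set.Ioo (0:ℝ) 1)
    (hxc : x ≠ sSup (insert 0 {y ∈ Set.Ioo (0:ℝ) 1 | g y ≤ u})) :
    g x ≤ u ↔ x ≤ sSup (insert 0 {y ∈ Set.Ioo (0:ℝ) 1 | g y ≤ u}) := by
  set S := {y ∈ Set.Ioo (0:ℝ) 1 | g y ≤ u} with hS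
  have hbdd : BddAbove (insert 0 S) := by
    refine ⟨1, fun y hy => ?_⟩
    rcases Set.mem_insert_iff.1 hy with rfl | hyS
    · norm_num
    · exact le_of_lt hyS.1.2
  have hnem : (insert 0 S).Nonempty := ⟨0, Set.mem_insert _ _⟩
  constructor
  · intro hgu
    exact le_csSup hbdd (Set.mem_insert_of_mem _ ⟨hx, hgu⟩)
  · intro hxc'
    have hlt : x < sSup (insert 0 S) := lt_of_le_of_ne hxc' hxc
    obtain ⟨y, hy, hxy⟩ := exists_lt_of_lt_csSup hnem hlt
    rcases Set.mem_insert_iff.1 hy with rfl | hyS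
    · linarith [hx.1]
    · have hxIcc : x ∈ Set.Icc (0:ℝ) 1 := ⟨le_of_lt hx.1, le_of_lt hx.2⟩
      have hyIcc : y ∈ Set.Icc (0:ℝ) 1 := ⟨le_of_lt hyS.1.1, le_of_lt hyS.1.2⟩
      exact le_trans (hg hxIcc hyIcc (le_of_lt hxy)) hyS.2

lemma event_reduce (h : IsILHS μ U0 σ) (hk : 2 ≤ k) {j0 j1 : Fin k} (hne : j0 ≠ j1)
    {g1 g2 : ℝ → ℝ} (hg1 : MonotoneOn g1 (Set.Icc (0:ℝ) 1))
    (hg2 : MonotoneOn g2 (Set.Icc (0:ℝ) 1)) (u v : ℝ) (s : ℕ) :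
    μ {ω | g1 (ilhs U0 σ s j0 ω) ≤ u ∧ g2 (ilhs U0 σ s j1 ω) ≤ v}
      = μ {ω | ilhs U0 σ s j0 ω ≤ sSup (insert 0 {y ∈ Set.Ioo (0:ℝ) 1 | g1 y ≤ u}) ∧
               ilhs U0 σ s j1 ω ≤ sSup (insert 0 {y ∈ Set.Ioo (0:ℝ) 1 | g2 y ≤ v})} := by
  have hatom0 : ∀ᵐ ω ∂μ, ilhs U0 σ s j0 ω ≠ sSup (insert 0 {y ∈ Set.Ioo (0:ℝ) 1 | g1 y ≤ u}) := by
    rw [ae_iff]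
    simpa using atom_zero h hk hne s _
  have hatom1 : ∀ᵐ ω ∂μ, ilhs U0 σ s j1 ω ≠ sSup (insert 0 {y ∈ Set.Ioo (0:ℝ) 1 | g2 y ≤ v}) := by
    rw [ae_iff]
    simpa using atom_zero h hk hne.symm s _
  apply measure_congr
  filter_upwards [ae_ilhs_mem h s j0, ae_ilhs_mem h s j1, hatom0, hatom1]
    with ω hX hY hcX hcY
  simp only [eq_iff_iff, Set.mem_setOf_eq]
  exact and_congr (threshold hg1 u hX hcX) (threshold hg2 v hY hcY)

end Assemble

end ILHSP

/-- Kolmogorov–Smirnov bound for ILHS: for nondecreasing `h₁, h₂` on `[0,1]`, the joint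
CDFs of `(h₁(U_s⁽¹⁾), h₂(U_s⁽²⁾))` at times `t` and `t + m` differ by at most
`k^{−(t−1)} (k−1)^{−(t+2)}`, uniformly in `(u, v)`. -/
theorem ilhs_ks_distance {Ω : Type*} [MeasurableSpace Ω] (μ : Measure Ω)
    [IsProbabilityMeasure μ] {k : ℕ} (hk : 2 ≤ k)
    (U0 : Fin k → Ω → ℝ) (σ : ℕ → Ω → Equiv.Perm (Fin k)) (h : IsILHS μ U0 σ)
    (h₁ h₂ : ℝ → ℝ)
    (hm₁ : MonotoneOn h₁ (Set.Icc (0 : ℝ) 1)) (hm₂ : MonotoneOn h₂ (Set.Icc (0 : ℝ) 1)) :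
    ∀ (t m : ℕ), 1 ≤ m → ∀ u v : ℝ,
      |(μ {ω | h₁ (ilhs U0 σ (t + m) ⟨0, by omega⟩ ω) ≤ u ∧
               h₂ (ilhs U0 σ (t + m) ⟨1, by omega⟩ ω) ≤ v}).toReal -
       (μ {ω | h₁ (ilhs U0 σ t ⟨0, by omega⟩ ω) ≤ u ∧
               h₂ (ilhs U0 σ t ⟨1, by omega⟩ ω) ≤ v}).toReal| ≤
      (k : ℝ) ^ (1 - (t : ℤ)) * ((k : ℝ) - 1) ^ (-((t : ℤ) + 2)) := by
  intro t m hm u v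
  have hne : (⟨0, by omega⟩ : Fin k) ≠ ⟨1, by omega⟩ := by
    intro hc
    have := congrArg Fin.val hc
    simp at this
  rw [ILHSP.event_reduce h hk hne hm₁ hm₂ u v (t + m),
    ILHSP.event_reduce h hk hne hm₁ hm₂ u v t]
  exact ILHSP.main_bound h hk hne hm t _ _
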